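/- Let F_e : 2^V → ℝ_+ (e ∈ E) be nonnegative submodular with F_e(∅)=F_e(V)=0 and Lovász extensions f_e, and let b ∈ ℝ^V. Consider the primal problem min_{x,η} (1/2)‖η‖² − ⟨b,x⟩ subject to f_e(x) ≤ η(e) for all e, and the dual problem min_{φ ≥ 0} (1/2)‖φ‖² subject to Σ_e φ(e) F_e(X) ≥ b(X) for all X ⊆ V. If (x*, η*) is primal optimal and φ* is dual optimal, then φ*(e) = f_e(x*) = η*(e) for every e ∈ E, and the optimal values satisfy (1/2)‖η*‖² − ⟨b, x*⟩ = −(1/2)‖φ*‖². -/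

import Mathlib

open scoped BigOperators

set_option linter.unusedSectionVars false
set_option linter.unnecessarySeqFocus false
set_option maxHeartbeats 1000000

def Bset {V : Type*} [Fintype V] (F : Finset V → ℝ) (x : V → ℝ) : Set ℝ :=
  {r : ℝ | ∃ w : V → ℝ,
    ((∀ S : Finset V, ∑ v ∈ S, w v ≤ F S) ∧ ∑ v, w v = F Finset.univ)
    ∧ r = ∑ v, x v * w v}

section
variable {V : Type*} [Fintype V] [DecidableEq V]
variable {V : Type*} [Fintype V] [DecidableEq V]


lemma f_nonneg' {F : Finset V → ℝ} {x : V → ℝ} {fx : ℝ}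
    (hnn : ∀ S, 0 ≤ F S) (hV : F Finset.univ = 0)
    (hg : IsGreatest (Bset F x) fx) : 0 ≤ fx := by
  apply hg.2
  exact ⟨0, ⟨fun S => by simpa using hnn S, by simpa using hV.symm⟩, by simp⟩

lemma f_translate' {F : Finset V → ℝ} {x : V → ℝ} {c fx fx' : ℝ}
    (hV : F Finset.univ = 0)
    (hg : IsGreatest (Bset F x) fx)
    (hg' : IsGreatest (Bset F (fun v => x v + c)) fx') : fx' = fx := by
  have hset : Bset F (fun v => x v + c) = Bset F x := by
    ext r
    constructor <;> rintro ⟨w, hw, rfl⟩ <;>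
      refine ⟨w, hw, ?_⟩ <;>
      · have : ∑ v, (x v + c) * w v = ∑ v, x v * w v + c * ∑ v, w v := by
          rw [Finset.mul_sum, ← Finset.sum_add_distrib]; exact Finset.sum_congr rfl fun v _ => by ring
        rw [this, hw.2, hV]; ring
  rw [hset] at hg'
  exact hg'.unique hg

lemma f_smul'' {F : Finset V → ℝ} {x : V → ℝ} {t fx fx' : ℝ} (ht : 0 < t)
    (hg : IsGreatest (Bset F x) fx)
    (hg' : IsGreatest (Bset F (fun v => t * x v)) fx') : fx' = t * fx := by
  have h1 : fx' ≤ t * fx := by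
    obtain ⟨w, hw, rfl⟩ := hg'.1
    have : ∑ v, (t * x v) * w v = t * ∑ v, x v * w v := by
      rw [Finset.mul_sum]; exact Finset.sum_congr rfl fun v _ => by ring
    rw [this]
    exact mul_le_mul_of_nonneg_left (hg.2 ⟨w, hw, rfl⟩) ht.le
  have h2 : t * fx ≤ fx' := by
    obtain ⟨w, hw, rfl⟩ := hg.1
    have : t * ∑ v, x v * w v = ∑ v, (t * x v) * w v := by
      rw [Finset.mul_sum]; exact Finset.sum_congr rfl fun v _ => by ring
    rw [this]
    exact hg'.2 ⟨w, hw, rfl⟩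
  linarith

lemma f_add_le' {F : Finset V → ℝ} {x y : V → ℝ} {fx fy fxy : ℝ}
    (hgx : IsGreatest (Bset F x) fx) (hgy : IsGreatest (Bset F y) fy)
    (hg : IsGreatest (Bset F (fun v => x v + y v)) fxy) : fxy ≤ fx + fy := by
  obtain ⟨w, hw, rfl⟩ := hg.1
  have : ∑ v, (x v + y v) * w v = ∑ v, x v * w v + ∑ v, y v * w v := by
    rw [← Finset.sum_add_distrib]; exact Finset.sum_congr rfl fun v _ => by ring
  rw [this]
  exact add_le_add (hgx.2 ⟨w, hw, rfl⟩) (hgy.2 ⟨w, hw, rfl⟩)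

lemma f_indicator_le' {F : Finset V → ℝ} {X : Finset V} {s fi : ℝ} (hs : 0 ≤ s)
    (hg : IsGreatest (Bset F (fun v => s * (if v ∈ X then (1:ℝ) else 0))) fi) :
    fi ≤ s * F X := by
  obtain ⟨w, hw, rfl⟩ := hg.1
  have h1 : ∑ v, (s * (if v ∈ X then (1:ℝ) else 0)) * w v = s * ∑ v ∈ X, w v := by
    rw [Finset.mul_sum,
      show (∑ v, (s * if v ∈ X then (1:ℝ) else 0) * w v)
        = ∑ v : V, if v ∈ X then s * w v else 0 from
        Finset.sum_congr rfl fun v _ => by by_cases h : v ∈ X <;> simp [h],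
      Finset.sum_ite_mem, Finset.univ_inter]
  rw [h1]
  exact mul_le_mul_of_nonneg_left (hw.1 X) hs


end

lemma helper_eps' {c A : ℝ} (hA : 0 ≤ A) (h : ∀ ε : ℝ, 0 < ε → ε < 1 → c ≤ A * ε) : c ≤ 0 := by
  by_contra hc
  push_neg at hc
  have hA1 : 0 < A + 1 := by linarith
  set ε := min (c / (2 * (A + 1))) (1/2) with hε
  have hε0 : 0 < ε := lt_min (by positivity) (by norm_num)
  have hε1 : ε < 1 := lt_of_le_of_lt (min_le_right _ _) (by norm_num)
  have h1 := h ε hε0 hε1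
  have h2 : A * ε ≤ A * (c / (2 * (A + 1))) := by
    apply mul_le_mul_of_nonneg_left (min_le_left _ _) hA
  have h3 : A * (c / (2 * (A + 1))) < c := by
    rw [mul_div_assoc'] -- maybe
    rw [div_lt_iff₀ (by linarith)]
    nlinarith
  linarith



lemma abel_nonneg (u d : ℕ → ℝ) (n : ℕ)
    (hu : ∀ k, k + 1 < n → u (k+1) ≤ u k)
    (hd0 : d 0 = 0) (hdn : d n = 0) (hd : ∀ k, k ≤ n → 0 ≤ d k) :
    0 ≤ ∑ k ∈ Finset.range n, u k * (d (k+1) - d k) := by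
  rcases Nat.eq_zero_or_pos n with h | h
  · simp [h]
  obtain ⟨m, rfl⟩ := Nat.exists_eq_add_of_le h
  have key : ∀ m', m' + 1 ≤ 1 + m →
      u m' * d (m' + 1) ≤ ∑ k ∈ Finset.range (m' + 1), u k * (d (k+1) - d k) := by
    intro m' hm'
    induction m' with
    | zero => simp [hd0]
    | succ p ih =>
      have h1 := ih (by omega)
      rw [Finset.sum_range_succ]
      have h2 : u p * d (p+1) - u (p+1) * d (p+1) ≥ 0 := by
        have := hu p (by omega)
        have := hd (p+1) (by omega)
        nlinarith
      nlinarith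
  rw [show 1 + m = m + 1 by omega] at *
  have h3 : u m * d (m+1) = 0 := by rw [hdn]; ring
  linarith [key m (by omega)]

lemma lovasz_lower' {V : Type*} [Fintype V] [DecidableEq V] {E : Type*} [Fintype E]
    (F : E → Finset V → ℝ)
    (hsub : ∀ e (S T : Finset V), F e (S ∪ T) + F e (S ∩ T) ≤ F e S + F e T)
    (h0 : ∀ e, F e ∅ = 0) (hV : ∀ e, F e Finset.univ = 0)
    (f : E → (V → ℝ) → ℝ)
    (hf : ∀ e x, IsGreatest (Bset (F e) x) (f e x))
    (φ : E → ℝ) (hφ0 : ∀ e, 0 ≤ φ e) (b : V → ℝ)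
    (hfeas : ∀ X : Finset V, (∑ x ∈ X, b x) ≤ ∑ e, φ e * F e X)
    (hbV : ∑ v, b v = 0) (x : V → ℝ) :
    ∑ v, b v * x v ≤ ∑ e, φ e * f e x := by
  classical
  set n := Fintype.card V with hn
  set e0 : Fin n ≃ V := (Fintype.equivFin V).symm with he0
  set π := Tuple.sort (fun i => -x (e0 i)) with hπ
  set τ : Fin n ≃ V := π.trans e0 with hτ
  have hτmono : ∀ i j : Fin n, i ≤ j → x (τ j) ≤ x (τ i) := by
    intro i j hij
    have h := Tuple.monotone_sort (fun i => -x (e0 i)) hij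
    simp only [Function.comp_apply] at h
    simp only [hτ, Equiv.trans_apply]
    linarith
  set S : ℕ → Finset V := fun k => Finset.univ.filter (fun v => (τ.symm v : ℕ) < k) with hS
  have hS0 : S 0 = ∅ := by simp [hS]
  have hSn : S n = Finset.univ := by
    apply Finset.eq_univ_iff_forall.mpr
    intro v
    simp only [hS, Finset.mem_filter, Finset.mem_univ, true_and]
    exact (τ.symm v).2
  have hSins : ∀ k (hk : k < n),
      S (k+1) = insert (τ ⟨k, hk⟩) (S k) ∧ τ ⟨k, hk⟩ ∉ S k := by
    intro k hk
    constructor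
    · ext v
      simp only [hS, Finset.mem_filter, Finset.mem_univ, true_and, Finset.mem_insert]
      constructor
      · intro hlt
        rcases Nat.lt_succ_iff_lt_or_eq.mp hlt with h | h
        · exact Or.inr h
        · left
          have : τ.symm v = ⟨k, hk⟩ := Fin.ext h
          rw [← this, Equiv.apply_symm_apply]
      · rintro (rfl | h)
        · simp
        · omega
    · simp [hS]
  -- greedy vector for a set function G
  set wfun : (Finset V → ℝ) → V → ℝ :=
    fun G v => G (S ((τ.symm v : ℕ) + 1)) - G (S (τ.symm v)) with hwfun
  have hIncr : ∀ (G : Finset V → ℝ) k (hk : k < n),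
      wfun G (τ ⟨k, hk⟩) = G (S (k+1)) - G (S k) := by
    intro G k hk
    simp [hwfun]
  have hfeasG : ∀ e (T : Finset V), ∑ v ∈ T, wfun (F e) v ≤ F e T := by
    intro e T
    have main : ∀ k, k ≤ n → ∑ v ∈ T ∩ S k, wfun (F e) v ≤ F e (T ∩ S k) := by
      intro k
      induction k with
      | zero => intro _; simp [hS0, h0]
      | succ p ih =>
        intro hpn
        have hp : p < n := hpn
        obtain ⟨hins, hnot⟩ := hSins p hp
        set a := τ ⟨p, hp⟩ with ha
        have hSsub : S p ⊆ S (p+1) := by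
          intro v hv
          simp only [hS, Finset.mem_filter, Finset.mem_univ, true_and] at hv ⊢
          omega
        by_cases haT : a ∈ T
        · have h1 : T ∩ S (p+1) = insert a (T ∩ S p) := by
            rw [hins]; ext v
            simp only [Finset.mem_inter, Finset.mem_insert]
            constructor
            · rintro ⟨hvT, rfl | hvS⟩
              · exact Or.inl rfl
              · exact Or.inr ⟨hvT, hvS⟩
            · rintro (rfl | ⟨hvT, hvS⟩)
              · exact ⟨haT, Or.inl rfl⟩
              · exact ⟨hvT, Or.inr hvS⟩
          have h2 : a ∉ T ∩ S p := fun h => hnot (Finset.mem_of_mem_inter_right h)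
          rw [h1, Finset.sum_insert h2]
          have h3 := ih hp.le
          have hsubm := hsub e (T ∩ S (p+1)) (S p)
          have hU : (T ∩ S (p+1)) ∪ S p = S (p+1) := by
            rw [h1, hins]; ext v
            simp only [Finset.mem_union, Finset.mem_insert, Finset.mem_inter]
            constructor
            · rintro ((rfl | ⟨_, hvS⟩) | hvS)
              · exact Or.inl rfl
              · exact Or.inr hvS
              · exact Or.inr hvS
            · rintro (rfl | hvS)
              · exact Or.inl (Or.inl rfl)
              · exact Or.inr hvS
          have hI : (T ∩ S (p+1)) ∩ S p = T ∩ S p := by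
            rw [h1]; ext v
            simp only [Finset.mem_inter, Finset.mem_insert]
            constructor
            · rintro ⟨rfl | ⟨hvT, _⟩, hvS⟩
              · exact absurd hvS hnot
              · exact ⟨hvT, hvS⟩
            · rintro ⟨hvT, hvS⟩
              exact ⟨Or.inr ⟨hvT, hvS⟩, hvS⟩
          rw [hU, hI, h1] at hsubm
          have h4 := hIncr (F e) p hp
          rw [← ha] at h4
          rw [h4]
          linarith
        · have h1 : T ∩ S (p+1) = T ∩ S p := by
            rw [hins]; ext v
            simp only [Finset.mem_inter, Finset.mem_insert]
            constructor
            · rintro ⟨hvT, rfl | hvS⟩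
              · exact absurd hvT haT
              · exact ⟨hvT, hvS⟩
            · rintro ⟨hvT, hvS⟩
              exact ⟨hvT, Or.inr hvS⟩
          rw [h1]; exact ih hp.le
    have := main n le_rfl
    rwa [hSn, Finset.inter_univ] at this
  have hsumG : ∀ e, ∑ v, wfun (F e) v = F e Finset.univ := by
    intro e
    have main : ∀ k, k ≤ n → ∑ v ∈ S k, wfun (F e) v = F e (S k) := by
      intro k
      induction k with
      | zero => intro _; simp [hS0, h0]
      | succ p ih =>
        intro hpn
        have hp : p < n := hpn
        obtain ⟨hins, hnot⟩ := hSins p hp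
        rw [hins, Finset.sum_insert hnot, ih hp.le, hIncr (F e) p hp, hins]
        ring
    have := main n le_rfl
    rwa [hSn] at this
  set u : ℕ → ℝ := fun k => if hk : k < n then x (τ ⟨k, hk⟩) else 0 with hu
  have hreindex : ∀ G : Finset V → ℝ,
      ∑ v, x v * wfun G v = ∑ k ∈ Finset.range n, u k * (G (S (k+1)) - G (S k)) := by
    intro G
    rw [← Equiv.sum_comp τ (fun v => x v * wfun G v),
      ← Fin.sum_univ_eq_sum_range (fun k => u k * (G (S (k+1)) - G (S k))) n]
    apply Finset.sum_congr rfl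
    intro i _
    have hi : (i : ℕ) < n := i.2
    simp only [hwfun, hu, Equiv.symm_apply_apply, dif_pos hi, Fin.eta]
  have hb_w : ∀ v, wfun (fun T => ∑ u ∈ T, b u) v = b v := by
    intro v
    have hk : ((τ.symm v : Fin n) : ℕ) < n := (τ.symm v).2
    obtain ⟨hins, hnot⟩ := hSins (τ.symm v) hk
    have hv : τ ⟨((τ.symm v : Fin n) : ℕ), hk⟩ = v := by
      rw [Fin.eta, Equiv.apply_symm_apply]
    rw [hv] at hins hnot
    simp only [hwfun]
    rw [hins, Finset.sum_insert hnot]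
    ring
  -- left side
  have hLHS : ∑ v, b v * x v
      = ∑ k ∈ Finset.range n, u k * ((∑ u ∈ S (k+1), b u) - ∑ u ∈ S k, b u) := by
    rw [← hreindex (fun T => ∑ u ∈ T, b u)]
    apply Finset.sum_congr rfl
    intro v _
    rw [hb_w v]; ring
  -- right side bound
  have hRHS : ∀ e, ∑ k ∈ Finset.range n, u k * (F e (S (k+1)) - F e (S k)) ≤ f e x := by
    intro e
    rw [← hreindex (F e)]
    exact (hf e x).2 ⟨wfun (F e), ⟨hfeasG e, hsumG e⟩, rfl⟩
  set d : ℕ → ℝ := fun k => (∑ e, φ e * F e (S k)) - ∑ u ∈ S k, b u with hd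
  have habel : 0 ≤ ∑ k ∈ Finset.range n, u k * (d (k+1) - d k) := by
    apply abel_nonneg
    · intro k hk
      have hk1 : k < n := by omega
      simp only [hu, dif_pos hk, dif_pos hk1]
      exact hτmono ⟨k, hk1⟩ ⟨k+1, hk⟩ (by simp [Fin.le_def])
    · simp [hd, hS0, h0]
    · simp [hd, hSn, hV, hbV]
    · intro k _
      simp only [hd, sub_nonneg]
      exact hfeas (S k)
  have hexpand : ∑ k ∈ Finset.range n, u k * (d (k+1) - d k)
      = (∑ e, φ e * ∑ k ∈ Finset.range n, u k * (F e (S (k+1)) - F e (S k)))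
        - ∑ v, b v * x v := by
    have hper : ∀ k, u k * (d (k+1) - d k)
        = (∑ e, φ e * (u k * (F e (S (k+1)) - F e (S k))))
          - u k * ((∑ u ∈ S (k+1), b u) - ∑ u ∈ S k, b u) := by
      intro k
      simp only [hd]
      rw [show (∑ e, φ e * (u k * (F e (S (k+1)) - F e (S k))))
          = u k * ((∑ e, φ e * F e (S (k+1))) - ∑ e, φ e * F e (S k)) by
        rw [← Finset.sum_sub_distrib, Finset.mul_sum]
        exact Finset.sum_congr rfl fun e _ => by ring]
      ring
    calc ∑ k ∈ Finset.range n, u k * (d (k+1) - d k)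
        = ∑ k ∈ Finset.range n, ((∑ e, φ e * (u k * (F e (S (k+1)) - F e (S k))))
            - u k * ((∑ u ∈ S (k+1), b u) - ∑ u ∈ S k, b u)) :=
          Finset.sum_congr rfl fun k _ => hper k
      _ = (∑ k ∈ Finset.range n, ∑ e, φ e * (u k * (F e (S (k+1)) - F e (S k))))
            - ∑ k ∈ Finset.range n, u k * ((∑ u ∈ S (k+1), b u) - ∑ u ∈ S k, b u) :=
          Finset.sum_sub_distrib _ _
      _ = (∑ e, φ e * ∑ k ∈ Finset.range n, u k * (F e (S (k+1)) - F e (S k)))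
            - ∑ v, b v * x v := by
          rw [Finset.sum_comm, ← hLHS]
          refine congrArg₂ (· - ·) ?_ rfl
          exact Finset.sum_congr rfl fun e _ => (Finset.mul_sum _ _ _).symm
  have hfinal : ∑ v, b v * x v
      ≤ ∑ e, φ e * ∑ k ∈ Finset.range n, u k * (F e (S (k+1)) - F e (S k)) := by
    linarith [habel, hexpand.symm.le]
  calc ∑ v, b v * x v
      ≤ ∑ e, φ e * ∑ k ∈ Finset.range n, u k * (F e (S (k+1)) - F e (S k)) := hfinal
    _ ≤ ∑ e, φ e * f e x := by
        apply Finset.sum_le_sum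
        intro e _
        exact mul_le_mul_of_nonneg_left (hRHS e) (hφ0 e)

/-- Strong duality and complementary slackness between the primal problem
`min (1/2)‖η‖² − ⟨b,x⟩ s.t. f_e(x) ≤ η(e)` and the dual
`min (1/2)‖φ‖² s.t. Σ_e φ(e)F_e(X) ≥ b(X)`: optimal solutions satisfy
`φ*(e) = f_e(x*) = η*(e)` and the optimal values are negatives of each other. -/
theorem primal_dual_optimal_relations {V E : Type*} [Fintype V] [DecidableEq V] [Fintype E]
    (F : E → Finset V → ℝ)
    (hsub : ∀ e (S T : Finset V), F e (S ∪ T) + F e (S ∩ T) ≤ F e S + F e T)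
    (hnn : ∀ e S, 0 ≤ F e S)
    (h0 : ∀ e, F e ∅ = 0) (hV : ∀ e, F e Finset.univ = 0)
    (f : E → (V → ℝ) → ℝ)
    (hf : ∀ e (x : V → ℝ), IsGreatest
      {r : ℝ | ∃ w : V → ℝ,
        ((∀ S : Finset V, ∑ v ∈ S, w v ≤ F e S) ∧ ∑ v, w v = F e Finset.univ)
        ∧ r = ∑ v, x v * w v} (f e x))
    (b : V → ℝ) (xs : V → ℝ) (ηs : E → ℝ) (φs : E → ℝ)
    (hpf : ∀ e, f e xs ≤ ηs e)
    (hpopt : ∀ (x : V → ℝ) (η : E → ℝ), (∀ e, f e x ≤ η e) →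
      2⁻¹ * (∑ e, (ηs e) ^ 2) - ∑ v, b v * xs v ≤
      2⁻¹ * (∑ e, (η e) ^ 2) - ∑ v, b v * x v)
    (hdf : (∀ e, 0 ≤ φs e) ∧
      ∀ X : Finset V, (∑ x ∈ X, b x) ≤ ∑ e, φs e * F e X)
    (hdopt : ∀ φ : E → ℝ, ((∀ e, 0 ≤ φ e) ∧
        ∀ X : Finset V, (∑ x ∈ X, b x) ≤ ∑ e, φ e * F e X) →
      2⁻¹ * (∑ e, (φs e) ^ 2) ≤ 2⁻¹ * (∑ e, (φ e) ^ 2)) :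
    (∀ e, φs e = f e xs ∧ f e xs = ηs e) ∧
    2⁻¹ * (∑ e, (ηs e) ^ 2) - ∑ v, b v * xs v = -(2⁻¹ * ∑ e, (φs e) ^ 2) := by
  classical
  have hf' : ∀ e x, IsGreatest (Bset (F e) x) (f e x) := hf
  -- f is nonnegative
  have hfnn : ∀ e (x : V → ℝ), 0 ≤ f e x := fun e x => f_nonneg' (hnn e) (hV e) (hf' e x)
  -- Step A: total weight of b is zero
  have hbV : ∑ v, b v = 0 := by
    have hc : ∀ c : ℝ, c * (∑ v, b v) ≤ 0 := by
      intro c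
      have hfe : ∀ e, f e (fun v => xs v + c) ≤ ηs e := by
        intro e
        rw [f_translate' (hV e) (hf' e xs) (hf' e _)]
        exact hpf e
      have h1 := hpopt (fun v => xs v + c) ηs hfe
      have hexp : ∑ v, b v * (xs v + c) = (∑ v, b v * xs v) + c * (∑ v, b v) := by
        rw [Finset.mul_sum, ← Finset.sum_add_distrib]
        exact Finset.sum_congr rfl fun v _ => by ring
      rw [hexp] at h1
      linarith
    nlinarith [hc (∑ v, b v), hc (-(∑ v, b v)), sq_nonneg (∑ v, b v)]
  -- Step C: ηs e = f e xs
  have hηf : ∀ e, ηs e = f e xs := by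
    have h1 := hpopt xs (fun e => f e xs) (fun e => le_rfl)
    have hsum : ∑ e, (ηs e) ^ 2 ≤ ∑ e, (f e xs) ^ 2 := by linarith
    have hterm : ∀ e, (f e xs) ^ 2 ≤ (ηs e) ^ 2 := fun e => by nlinarith [hpf e, hfnn e xs]
    have hze : ∀ e ∈ Finset.univ, (ηs e) ^ 2 - (f e xs) ^ 2 = 0 := by
      rw [← Finset.sum_eq_zero_iff_of_nonneg (fun e _ => by linarith [hterm e])]
      rw [Finset.sum_sub_distrib]
      have h2 : ∑ e, (f e xs) ^ 2 ≤ ∑ e, (ηs e) ^ 2 :=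
        Finset.sum_le_sum fun e _ => hterm e
      linarith
    intro e
    have h3 := hze e (Finset.mem_univ e)
    nlinarith [hpf e, hfnn e xs]
  -- Step D: A = B
  set A := ∑ e, (ηs e) ^ 2 with hA
  set B := ∑ v, b v * xs v with hB
  have hA0 : 0 ≤ A := Finset.sum_nonneg fun e _ => sq_nonneg _
  have hscale : ∀ t : ℝ, 0 < t → 2⁻¹ * A - B ≤ 2⁻¹ * t ^ 2 * A - t * B := by
    intro t ht
    have hfe : ∀ e, f e (fun v => t * xs v) ≤ t * ηs e := by
      intro e
      rw [f_smul'' ht (hf' e xs) (hf' e _)]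
      exact mul_le_mul_of_nonneg_left (hpf e) ht.le
    have h1 := hpopt (fun v => t * xs v) (fun e => t * ηs e) hfe
    have h2 : ∑ e, (t * ηs e) ^ 2 = t ^ 2 * A := by
      rw [hA, Finset.mul_sum]
      exact Finset.sum_congr rfl fun e _ => by ring
    have h3 : ∑ v, b v * (t * xs v) = t * B := by
      rw [hB, Finset.mul_sum]
      exact Finset.sum_congr rfl fun v _ => by ring
    rw [h2, h3] at h1
    linarith
  have hAB : A = B := by
    have h1 : B - A ≤ 0 := by
      apply helper_eps' (c := B - A) (A := 2⁻¹ * A) (by linarith)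
      intro ε hε0 hε1
      have := hscale (1 + ε) (by linarith)
      nlinarith
    have h2 : A - B ≤ 0 := by
      apply helper_eps' (c := A - B) (A := 2⁻¹ * A) (by linarith)
      intro ε hε0 hε1
      have := hscale (1 - ε) (by linarith)
      nlinarith
    linarith
  -- Step E: ηs is dual feasible
  have hηfeas : ∀ X : Finset V, (∑ v ∈ X, b v) ≤ ∑ e, ηs e * F e X := by
    intro X
    have hkey : ∀ s : ℝ, 0 < s → s < 1 →
        (∑ v ∈ X, b v) - ∑ e, ηs e * F e X ≤ (2⁻¹ * ∑ e, (F e X) ^ 2) * s := by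
      intro s hs0 hs1
      have hfe : ∀ e, f e (fun v => xs v + s * (if v ∈ X then (1:ℝ) else 0)) ≤
          ηs e + s * F e X := by
        intro e
        have h1 := f_add_le' (hf' e xs) (hf' e (fun v => s * (if v ∈ X then (1:ℝ) else 0)))
          (hf' e _)
        have h2 := f_indicator_le' (F := F e) (X := X) hs0.le (hf' e _)
        calc f e (fun v => xs v + s * (if v ∈ X then (1:ℝ) else 0))
            ≤ f e xs + f e (fun v => s * (if v ∈ X then (1:ℝ) else 0)) := h1
          _ ≤ ηs e + s * F e X := add_le_add (hpf e) h2
      have h1 := hpopt _ (fun e => ηs e + s * F e X) hfe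
      have h2 : ∑ e, (ηs e + s * F e X) ^ 2
          = A + 2 * s * (∑ e, ηs e * F e X) + s ^ 2 * ∑ e, (F e X) ^ 2 := by
        rw [hA, Finset.mul_sum, Finset.mul_sum, ← Finset.sum_add_distrib,
          ← Finset.sum_add_distrib]
        exact Finset.sum_congr rfl fun e _ => by ring
      have h3 : ∑ v, b v * (xs v + s * (if v ∈ X then (1:ℝ) else 0))
          = B + s * ∑ v ∈ X, b v := by
        rw [hB]
        rw [show (∑ v ∈ X, b v) = ∑ v : V, if v ∈ X then b v else 0 by
          rw [Finset.sum_ite_mem, Finset.univ_inter]]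
        rw [Finset.mul_sum, ← Finset.sum_add_distrib]
        exact Finset.sum_congr rfl fun v _ => by by_cases h : v ∈ X <;> simp [h] <;> ring
      rw [h2, h3] at h1
      have h4 : s * ((∑ v ∈ X, b v) - ∑ e, ηs e * F e X) ≤ s * ((2⁻¹ * ∑ e, (F e X) ^ 2) * s) := by
        nlinarith
      have := (mul_le_mul_iff_right₀ hs0).mp h4
      linarith
    have := helper_eps' (c := (∑ v ∈ X, b v) - ∑ e, ηs e * F e X)
      (A := 2⁻¹ * ∑ e, (F e X) ^ 2)
      (by positivity) hkey
    linarith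
  have hηnn : ∀ e, 0 ≤ ηs e := fun e => (hηf e) ▸ hfnn e xs
  -- Step F: assemble
  have hdle : ∑ e, (φs e) ^ 2 ≤ A := by
    have := hdopt ηs ⟨hηnn, hηfeas⟩
    rw [← hA] at this
    linarith
  have hwd : B ≤ ∑ e, φs e * ηs e := by
    have h1 := lovasz_lower' F hsub h0 hV f hf' φs hdf.1 b hdf.2 hbV xs
    rw [← hB] at h1
    calc B ≤ ∑ e, φs e * f e xs := h1
      _ = ∑ e, φs e * ηs e := Finset.sum_congr rfl fun e _ => by rw [hηf e]
  have hφη : ∑ e, φs e * ηs e ≤ 2⁻¹ * (∑ e, (φs e) ^ 2) + 2⁻¹ * A := by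
    rw [hA, Finset.mul_sum, Finset.mul_sum, ← Finset.sum_add_distrib]
    exact Finset.sum_le_sum fun e _ => by nlinarith [sq_nonneg (φs e - ηs e)]
  have hφA : ∑ e, (φs e) ^ 2 = A := by
    have : A ≤ ∑ e, (φs e) ^ 2 := by linarith [hAB, hwd, hφη]
    linarith
  have hsq0 : ∀ e, φs e = ηs e := by
    have hsum0 : ∑ e, (φs e - ηs e) ^ 2 ≤ 0 := by
      have hexp : ∑ e, (φs e - ηs e) ^ 2
          = (∑ e, (φs e) ^ 2) - 2 * (∑ e, φs e * ηs e) + A := by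
        rw [hA, Finset.mul_sum, ← Finset.sum_sub_distrib, ← Finset.sum_add_distrib]
        exact Finset.sum_congr rfl fun e _ => by ring
      rw [hexp, hφA]
      linarith [hAB, hwd]
    intro e
    have h1 : ∀ e ∈ Finset.univ, (0:ℝ) ≤ (φs e - ηs e) ^ 2 := fun e _ => sq_nonneg _
    have h2 : ∑ e, (φs e - ηs e) ^ 2 = 0 :=
      le_antisymm hsum0 (Finset.sum_nonneg h1)
    have h3 := (Finset.sum_eq_zero_iff_of_nonneg h1).mp h2 e (Finset.mem_univ e)
    have := sq_eq_zero_iff.mp h3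
    linarith
  constructor
  · intro e
    exact ⟨by rw [hsq0 e, hηf e], (hηf e).symm⟩
  · rw [hφA, hAB]
    ring
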